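/- Let X be a Lindelöf regular space with two covers 𝒴 and ℋ such that: (1) |𝒴| ≤ 𝔠, every Y ∈ 𝒴 is countably tight, and X = ⋃{cl(A) : A ⊆ Y, |A| ≤ 𝔠} for every Y ∈ 𝒴; (2) every H ∈ ℋ is a nonempty closed Gδ subset of X with weight w(H) ≤ 𝔠; (3) for every set D ⊆ X with |D| ≤ 𝔠 the closure cl(D) has weight w(cl(D)) ≤ 𝔠. Then w(X) ≤ 𝔠. -/

import Mathlib

open Set Cardinal

/-- A topological space `Z` is countably tight if whenever a point lies in the closure
of a set `A`, it lies in the closure of a countable subset of `A`. -/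
def CountablyTight (Z : Type*) [TopologicalSpace Z] : Prop :=
  ∀ (A : Set Z) (z : Z), z ∈ closure A → ∃ B ⊆ A, B.Countable ∧ z ∈ closure B

/-- The weight of `Z` is at most `κ`: there is a topological basis of cardinality `≤ κ`. -/
def WeightLE (Z : Type*) [TopologicalSpace Z] (κ : Cardinal) : Prop :=
  ∃ B : Set (Set Z), TopologicalSpace.IsTopologicalBasis B ∧ #B ≤ κ

universe u
open TopologicalSpace

namespace S6
open scoped Classical

lemma weightLE_of_univ {X : Type u} [TopologicalSpace X] {κ : Cardinal}
    (h : WeightLE ↥(Set.univ : Set X) κ) : WeightLE X κ := by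
  obtain ⟨B, hB, hcard⟩ := h
  refine ⟨(fun b => Subtype.val '' b) '' B, ?_, le_trans mk_image_le hcard⟩
  apply isTopologicalBasis_of_isOpen_of_nhds
  · rintro _ ⟨b, hb, rfl⟩
    exact isOpen_univ.isOpenMap_subtype_val b (hB.isOpen hb)
  · intro a u ha hu
    have ha' : (⟨a, mem_univ a⟩ : ↥(Set.univ : Set X)) ∈ Subtype.val ⁻¹' u := ha
    obtain ⟨b, hbB, hab, hbu⟩ := hB.exists_subset_of_mem_open ha'
      (hu.preimage continuous_subtype_val)
    refine ⟨Subtype.val '' b, ⟨b, hbB, rfl⟩, ⟨⟨a, mem_univ a⟩, hab, rfl⟩, ?_⟩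
    rintro _ ⟨y, hy, rfl⟩
    exact hbu hy

lemma isGδ_seq {X : Type u} [TopologicalSpace X] {s : Set X} (h : IsGδ s) :
    ∃ U : ℕ → Set X, (∀ n, IsOpen (U n)) ∧ s = ⋂ n, U n := by
  obtain ⟨T, hTopen, hTc, rfl⟩ := h
  rcases T.eq_empty_or_nonempty with rfl | hne
  · exact ⟨fun _ => univ, fun _ => isOpen_univ, by simp⟩
  · obtain ⟨f, rfl⟩ := hTc.exists_eq_range hne
    exact ⟨f, fun n => hTopen _ (mem_range_self n), by simp [sInter_range]⟩

noncomputable def gU {X : Type u} [TopologicalSpace X] (H : Set X) : ℕ → Set X :=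
  if h : IsGδ H then (isGδ_seq h).choose else fun _ => univ

lemma gU_isOpen {X : Type u} [TopologicalSpace X] (H : Set X) (n : ℕ) : IsOpen (gU H n) := by
  unfold gU; split
  · next h => exact (isGδ_seq h).choose_spec.1 n
  · exact isOpen_univ

lemma gU_iInter {X : Type u} [TopologicalSpace X] {H : Set X} (h : IsGδ H) :
    (⋂ n, gU H n) = H := by
  unfold gU; rw [dif_pos h]; exact ((isGδ_seq h).choose_spec.2).symm

lemma subset_gU {X : Type u} [TopologicalSpace X] {H : Set X} (h : IsGδ H) (n : ℕ) :
    H ⊆ gU H n := by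
  intro x hx
  have := (gU_iInter h) ▸ hx
  exact mem_iInter.1 this n


lemma card_nat_fun (γ : Type u) : #(ℕ → γ) = #γ ^ (aleph0 : Cardinal.{u}) := by
  have e : (ℕ → γ) ≃ (ULift.{u} ℕ → γ) := Equiv.arrowCongr Equiv.ulift.symm (Equiv.refl γ)
  rw [Cardinal.mk_congr e, ← Cardinal.power_def, mk_denumerable (ULift.{u} ℕ)]

lemma card_seq_in {α : Type u} (T : Set α) :
    #({f : ℕ → α | ∀ n, f n ∈ T}) ≤ #T ^ (aleph0 : Cardinal.{u}) := by
  let Ψ : ({f : ℕ → α | ∀ n, f n ∈ T}) → (ℕ → ↥T) := fun f n => ⟨(f : ℕ → α) n, f.2 n⟩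
  have hinj : Function.Injective Ψ := by
    intro f g hfg
    apply Subtype.ext
    funext n
    exact congrArg Subtype.val (congrFun hfg n)
  calc #({f : ℕ → α | ∀ n, f n ∈ T}) ≤ #(ℕ → ↥T) := Cardinal.mk_le_of_injective hinj
    _ = #T ^ (aleph0 : Cardinal.{u}) := card_nat_fun _

lemma card_cnt {X : Type u} {E : Set X} (hE : #E ≤ continuum) :
    #({B : Set X | B ⊆ E ∧ B.Countable}) ≤ continuum := by
  have key : ∀ B : ↥{B : Set X | B ⊆ E ∧ B.Countable}, ∃ ψ : ℕ → Option ↥E,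
      (B : Set X) = {x | ∃ n, ((ψ n).map Subtype.val) = some x} := by
    rintro ⟨B, hBE, hBc⟩
    rcases B.eq_empty_or_nonempty with rfl | hne
    · exact ⟨fun _ => none, by simp⟩
    · obtain ⟨f, hf⟩ := hBc.exists_eq_range hne
      refine ⟨fun n => some ⟨f n, hBE (hf ▸ mem_range_self n)⟩, ?_⟩
      simp only [Option.map_some, Option.some.injEq]
      rw [hf]
      ext x
      simp [eq_comm]
  choose ψ hψ using key
  have hinj : Function.Injective ψ := by
    intro B B' h
    apply Subtype.ext
    rw [hψ B, hψ B', h]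
  calc #({B : Set X | B ⊆ E ∧ B.Countable})
      ≤ #(ℕ → Option ↥E) := Cardinal.mk_le_of_injective hinj
    _ = #(Option ↥E) ^ (aleph0 : Cardinal.{u}) := card_nat_fun _
    _ ≤ continuum ^ (aleph0 : Cardinal.{u}) := by
        refine power_le_power_right ?_
        rw [mk_option]
        calc #↥E + 1 ≤ continuum + 1 := add_le_add_left hE 1
          _ = continuum := by
              refine add_one_eq aleph0_le_continuum
    _ = continuum := continuum_power_aleph0

noncomputable def opensOf {X : Type u} [TopologicalSpace X] (T : Set (Set X)) : Set (Set X) :=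
  ⋃ H : ↥T, range (gU (H : Set X))

lemma mem_opensOf {X : Type u} [TopologicalSpace X] {T : Set (Set X)} {H : Set X}
    (hH : H ∈ T) (n : ℕ) : gU H n ∈ opensOf T :=
  mem_iUnion.2 ⟨⟨H, hH⟩, mem_range_self n⟩

lemma card_opensOf {X : Type u} [TopologicalSpace X] {T : Set (Set X)}
    (hT : #T ≤ continuum) : #(opensOf T) ≤ continuum := by
  refine le_trans (mk_iUnion_le _) ?_
  have h1 : ∀ H : ↥T, #(range (gU (H : Set X))) ≤ (aleph0 : Cardinal.{u}) := by
    intro H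
    have he : range (gU (H : Set X)) = range (fun n : ULift.{u} ℕ => gU (H : Set X) n.down) := by
      ext O
      constructor
      · rintro ⟨n, rfl⟩; exact ⟨⟨n⟩, rfl⟩
      · rintro ⟨n, rfl⟩; exact ⟨n.down, rfl⟩
    rw [he]
    refine le_trans mk_range_le ?_
    rw [mk_denumerable (ULift.{u} ℕ)]
  calc #↥T * ⨆ H : ↥T, #(range (gU (H : Set X)))
      ≤ continuum * (aleph0 : Cardinal.{u}) := mul_le_mul' hT (ciSup_le' h1)
    _ ≤ continuum * continuum := mul_le_mul' le_rfl aleph0_le_continuum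
    _ = continuum := mul_eq_self aleph0_le_continuum

structure Pack (X : Type u) [TopologicalSpace X] : Type (u + 1) where
  Yc : Set (Set X)
  Hc : Set (Set X)
  x0 : X
  hYcard : #Yc ≤ continuum
  hYcover : ⋃₀ Yc = Set.univ
  hYct : ∀ Y ∈ Yc, CountablyTight ↥Y
  hYbig : ∀ Y ∈ Yc, ∀ x : X, ∃ A ⊆ Y, #A ≤ continuum ∧ x ∈ closure A
  hHcover : ⋃₀ Hc = Set.univ
  hH : ∀ H ∈ Hc, H.Nonempty ∧ IsClosed H ∧ IsGδ H ∧ WeightLE ↥H continuum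
  hcl : ∀ D : Set X, #D ≤ continuum → WeightLE ↥(closure D) continuum

namespace Pack
variable {X : Type u} [TopologicalSpace X] (P : Pack X)

/-! ### the absorption sets -/

noncomputable def A (Y : Set X) (x : X) : Set X :=
  if h : Y ∈ P.Yc then (P.hYbig Y h x).choose else ∅

lemma A_subset {Y : Set X} (h : Y ∈ P.Yc) (x : X) : P.A Y x ⊆ Y := by
  unfold A; rw [dif_pos h]; exact (P.hYbig Y h x).choose_spec.1

lemma A_card {Y : Set X} (h : Y ∈ P.Yc) (x : X) : #(P.A Y x) ≤ continuum := by
  unfold A; rw [dif_pos h]; exact (P.hYbig Y h x).choose_spec.2.1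

lemma mem_closure_A {Y : Set X} (h : Y ∈ P.Yc) (x : X) : x ∈ closure (P.A Y x) := by
  unfold A; rw [dif_pos h]; exact (P.hYbig Y h x).choose_spec.2.2

/-! ### dense subsets of members of `Hc` -/

noncomputable def S (H : Set X) : Set X :=
  if h : WeightLE ↥H continuum then
    range (fun b : ↥(h.choose) =>
      if hb : ((b : Set ↥H)).Nonempty then ((hb.choose : ↥H) : X) else P.x0)
  else ∅

lemma S_card (H : Set X) : #(P.S H) ≤ continuum := by
  unfold S; split
  · next h =>
      refine le_trans mk_range_le ?_
      exact le_trans h.choose_spec.2 le_rfl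
  · simp

lemma subset_closure_S {H : Set X} (h : WeightLE ↥H continuum) : H ⊆ closure (P.S H) := by
  intro y hy
  rw [mem_closure_iff]
  intro O hO hyO
  have hbasis := h.choose_spec.1
  have hyO' : (⟨y, hy⟩ : ↥H) ∈ Subtype.val ⁻¹' O := hyO
  obtain ⟨b, hbB, hyb, hbO⟩ := hbasis.exists_subset_of_mem_open hyO'
    (hO.preimage continuous_subtype_val)
  have hbne : (b : Set ↥H).Nonempty := ⟨⟨y, hy⟩, hyb⟩
  refine ⟨((hbne.choose : ↥H) : X), ?_, ?_⟩
  · exact hbO hbne.choose_spec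
  · unfold S
    rw [dif_pos h]
    refine ⟨⟨b, hbB⟩, ?_⟩
    simp only
    rw [dif_pos hbne]

/-! ### the `Gδ` covers of closures of small sets -/

noncomputable def bas (B : Set X) : Set (Set ↥(closure B)) :=
  if h : #B ≤ continuum then (P.hcl B h).choose else ∅

lemma bas_isBasis {B : Set X} (h : #B ≤ continuum) :
    IsTopologicalBasis (P.bas B) := by
  unfold bas; rw [dif_pos h]; exact (P.hcl B h).choose_spec.1

lemma bas_card {B : Set X} (h : #B ≤ continuum) : #(P.bas B) ≤ continuum := by
  unfold bas; rw [dif_pos h]; exact (P.hcl B h).choose_spec.2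

noncomputable def pickH (B : Set X) (f : ℕ → Set ↥(closure B)) : Set X :=
  if h : ∃ H ∈ P.Hc, (Subtype.val '' ⋂ n, f n) ⊆ H then h.choose else ∅

noncomputable def HCl (B : Set X) : Set (Set X) :=
  (fun f => P.pickH B f) ''
    {f | (∀ n, f n ∈ P.bas B) ∧ ∃ H ∈ P.Hc, (Subtype.val '' ⋂ n, f n) ⊆ H}

lemma pickH_spec {B : Set X} {f : ℕ → Set ↥(closure B)}
    (h : ∃ H ∈ P.Hc, (Subtype.val '' ⋂ n, f n) ⊆ H) :
    P.pickH B f ∈ P.Hc ∧ (Subtype.val '' ⋂ n, f n) ⊆ P.pickH B f := by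
  unfold pickH; rw [dif_pos h]
  exact ⟨h.choose_spec.1, h.choose_spec.2⟩

lemma HCl_subset (B : Set X) : P.HCl B ⊆ P.Hc := by
  rintro _ ⟨f, hf, rfl⟩
  exact (P.pickH_spec hf.2).1

lemma HCl_card {B : Set X} (hB : #B ≤ continuum) : #(P.HCl B) ≤ continuum := by
  refine le_trans mk_image_le ?_
  have hsub : {f : ℕ → Set ↥(closure B) |
      (∀ n, f n ∈ P.bas B) ∧ ∃ H ∈ P.Hc, (Subtype.val '' ⋂ n, f n) ⊆ H}
      ⊆ {f : ℕ → Set ↥(closure B) | ∀ n, f n ∈ P.bas B} := fun f hf => hf.1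
  refine le_trans (mk_le_mk_of_subset hsub) ?_
  refine le_trans (card_seq_in (P.bas B)) ?_
  calc #(P.bas B) ^ (aleph0 : Cardinal.{u}) ≤ continuum ^ (aleph0 : Cardinal.{u}) :=
        power_le_power_right (P.bas_card hB)
    _ = continuum := continuum_power_aleph0

lemma HCl_cover {B : Set X} (hB : #B ≤ continuum) {y : X} (hy : y ∈ closure B) :
    ∃ Hs ∈ P.HCl B, y ∈ Hs := by
  have hycov : y ∈ ⋃₀ P.Hc := P.hHcover ▸ Set.mem_univ y
  obtain ⟨H0, hH0, hyH0⟩ := hycov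
  have hGδ : IsGδ H0 := (P.hH H0 hH0).2.2.1
  have hbasis := P.bas_isBasis hB
  have hyn : ∀ n, (⟨y, hy⟩ : ↥(closure B)) ∈ (Subtype.val ⁻¹' gU H0 n : Set ↥(closure B)) :=
    fun n => subset_gU hGδ n hyH0
  choose f hf1 hf2 hf3 using fun n =>
    hbasis.exists_subset_of_mem_open (hyn n)
      ((gU_isOpen H0 n).preimage continuous_subtype_val)
  have hex : ∃ H ∈ P.Hc, (Subtype.val '' ⋂ n, f n) ⊆ H := by
    refine ⟨H0, hH0, ?_⟩
    rintro x ⟨x', hx', rfl⟩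
    rw [← gU_iInter hGδ]
    exact mem_iInter.2 fun n => hf3 n (mem_iInter.1 hx' n)
  refine ⟨P.pickH B f, ⟨f, ⟨hf1, hex⟩, rfl⟩, ?_⟩
  exact (P.pickH_spec hex).2 ⟨⟨y, hy⟩, mem_iInter.2 hf2, rfl⟩

/-! ### countable subsets, pool, escapes, the operator Φ -/

def cnt (E : Set X) : Set (Set X) := {B : Set X | B ⊆ E ∧ B.Countable}

noncomputable def pool (E : Set X) : Set (Set X) :=
  ⋃ B : ↥(cnt E), opensOf (P.HCl (B : Set X))

lemma mem_pool {E B H : Set X} (hBE : B ⊆ E) (hBc : B.Countable)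
    (hH : H ∈ P.HCl B) (n : ℕ) : gU H n ∈ P.pool E :=
  mem_iUnion.2 ⟨⟨B, hBE, hBc⟩, mem_opensOf hH n⟩

lemma card_HCl_of_countable {B : Set X} (hBc : B.Countable) : #(P.HCl B) ≤ continuum :=
  P.HCl_card (le_trans hBc.le_aleph0 aleph0_le_continuum)

lemma card_pool {E : Set X} (hE : #E ≤ continuum) : #(P.pool E) ≤ continuum := by
  refine le_trans (mk_iUnion_le _) ?_
  have h1 : ∀ B : ↥(cnt E), #(opensOf (P.HCl (B : Set X))) ≤ continuum :=
    fun B => card_opensOf (P.card_HCl_of_countable B.2.2)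
  calc #↥(cnt E) * ⨆ B : ↥(cnt E), #(opensOf (P.HCl (B : Set X)))
      ≤ continuum * continuum := mul_le_mul' (card_cnt hE) (ciSup_le' h1)
    _ = continuum := mul_eq_self aleph0_le_continuum

noncomputable def escPt (f : ℕ → Set X) : X :=
  if h : ((⋃ n, f n)ᶜ : Set X).Nonempty then h.choose else P.x0

lemma escPt_not_mem {f : ℕ → Set X} (h : (⋃ n, f n) ≠ Set.univ) :
    P.escPt f ∉ ⋃ n, f n := by
  have hne : ((⋃ n, f n)ᶜ : Set X).Nonempty := nonempty_compl.2 h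
  unfold escPt
  rw [dif_pos hne]
  exact hne.choose_spec

noncomputable def esc (Pl : Set (Set X)) : Set X := P.escPt '' {f | ∀ n, f n ∈ Pl}

lemma escPt_mem_esc {Pl : Set (Set X)} {f : ℕ → Set X} (hf : ∀ n, f n ∈ Pl) :
    P.escPt f ∈ P.esc Pl := mem_image_of_mem _ hf

lemma card_esc {Pl : Set (Set X)} (hPl : #Pl ≤ continuum) : #(P.esc Pl) ≤ continuum := by
  refine le_trans mk_image_le ?_
  refine le_trans (card_seq_in Pl) ?_
  calc #Pl ^ (aleph0 : Cardinal.{u}) ≤ continuum ^ (aleph0 : Cardinal.{u}) :=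
        power_le_power_right hPl
    _ = continuum := continuum_power_aleph0

noncomputable def absorb (E : Set X) : Set X :=
  ⋃ Y : ↥P.Yc, ⋃ d : ↥E, P.A (Y : Set X) (d : X)

lemma card_absorb {E : Set X} (hE : #E ≤ continuum) : #(P.absorb E) ≤ continuum := by
  refine le_trans (mk_iUnion_le _) ?_
  have h1 : ∀ Y : ↥P.Yc, #(⋃ d : ↥E, P.A (Y : Set X) (d : X)) ≤ continuum := by
    intro Y
    refine le_trans (mk_iUnion_le _) ?_
    have h2 : ∀ d : ↥E, #(P.A (Y : Set X) (d : X)) ≤ continuum :=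
      fun d => P.A_card Y.2 _
    calc #↥E * ⨆ d : ↥E, #(P.A (Y : Set X) (d : X))
        ≤ continuum * continuum := mul_le_mul' hE (ciSup_le' h2)
      _ = continuum := mul_eq_self aleph0_le_continuum
  calc #↥P.Yc * ⨆ Y : ↥P.Yc, #(⋃ d : ↥E, P.A (Y : Set X) (d : X))
      ≤ continuum * continuum := mul_le_mul' P.hYcard (ciSup_le' h1)
    _ = continuum := mul_eq_self aleph0_le_continuum

noncomputable def hdense (E : Set X) : Set X :=
  ⋃ B : ↥(cnt E), ⋃ H : ↥(P.HCl (B : Set X)), P.S (H : Set X)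

lemma card_hdense {E : Set X} (hE : #E ≤ continuum) : #(P.hdense E) ≤ continuum := by
  refine le_trans (mk_iUnion_le _) ?_
  have h1 : ∀ B : ↥(cnt E), #(⋃ H : ↥(P.HCl (B : Set X)), P.S (H : Set X)) ≤ continuum := by
    intro B
    refine le_trans (mk_iUnion_le _) ?_
    have h2 : ∀ H : ↥(P.HCl (B : Set X)), #(P.S (H : Set X)) ≤ continuum :=
      fun H => P.S_card _
    calc #↥(P.HCl (B : Set X)) * ⨆ H : ↥(P.HCl (B : Set X)), #(P.S (H : Set X))
        ≤ continuum * continuum :=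
          mul_le_mul' (P.card_HCl_of_countable B.2.2) (ciSup_le' h2)
      _ = continuum := mul_eq_self aleph0_le_continuum
  calc #↥(cnt E) * ⨆ B : ↥(cnt E), #(⋃ H : ↥(P.HCl (B : Set X)), P.S (H : Set X))
      ≤ continuum * continuum := mul_le_mul' (card_cnt hE) (ciSup_le' h1)
    _ = continuum := mul_eq_self aleph0_le_continuum

noncomputable def Phi (E : Set X) : Set X :=
  (insert P.x0 E ∪ P.absorb E) ∪ (P.hdense E ∪ P.esc (P.pool E))

lemma subset_Phi (E : Set X) : E ⊆ P.Phi E :=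
  fun x hx => Or.inl (Or.inl (mem_insert_of_mem _ hx))

lemma x0_mem_Phi (E : Set X) : P.x0 ∈ P.Phi E := Or.inl (Or.inl (mem_insert _ _))

lemma A_subset_Phi {E Y : Set X} (hY : Y ∈ P.Yc) {d : X} (hd : d ∈ E) :
    P.A Y d ⊆ P.Phi E := by
  intro x hx
  exact Or.inl (Or.inr (mem_iUnion.2 ⟨⟨Y, hY⟩, mem_iUnion.2 ⟨⟨d, hd⟩, hx⟩⟩))

lemma S_subset_Phi {E B H : Set X} (hBE : B ⊆ E) (hBc : B.Countable)
    (hH : H ∈ P.HCl B) : P.S H ⊆ P.Phi E := by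
  intro x hx
  exact Or.inr (Or.inl (mem_iUnion.2 ⟨⟨B, hBE, hBc⟩, mem_iUnion.2 ⟨⟨H, hH⟩, hx⟩⟩))

lemma esc_subset_Phi (E : Set X) : P.esc (P.pool E) ⊆ P.Phi E :=
  fun x hx => Or.inr (Or.inr hx)

lemma card_Phi {E : Set X} (hE : #E ≤ continuum) : #(P.Phi E) ≤ continuum := by
  have h1 : #(insert P.x0 E : Set X) ≤ continuum := by
    refine le_trans (mk_insert_le) ?_
    calc #E + 1 ≤ continuum + 1 := add_le_add_left hE 1
      _ = continuum := add_one_eq aleph0_le_continuum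
  have h2 := P.card_absorb hE
  have h3 := P.card_hdense hE
  have h4 := P.card_esc (P.card_pool hE)
  unfold Phi
  refine le_trans (mk_union_le _ _) ?_
  have hu1 := le_trans (mk_union_le _ _) (add_le_add h1 h2)
  have hu2 := le_trans (mk_union_le _ _) (add_le_add h3 h4)
  calc #(↥((insert P.x0 E ∪ P.absorb E) : Set X)) + #(↥((P.hdense E ∪ P.esc (P.pool E)) : Set X))
      ≤ (continuum + continuum) + (continuum + continuum) := add_le_add hu1 hu2
    _ = continuum := by simp [continuum_add_self]


end Pack

/-! ### the transfinite construction -/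

abbrev Om : Type u := (Cardinal.aleph 1).ord.ToType

instance : IsWellOrder Om.{u} (· < ·) := { }

lemma type_Om : Ordinal.type ((· < ·) : Om.{u} → Om.{u} → Prop) = (Cardinal.aleph 1).ord :=
  Ordinal.type_toType _

lemma mk_Om : #(Om.{u}) = (aleph 1 : Cardinal.{u}) := by
  have := mk_toType (Cardinal.aleph 1).ord
  rw [card_ord] at this
  exact this

lemma bounded_lt {s : Set Om.{u}} (hs : s.Countable) : ∃ t : Om.{u}, ∀ x ∈ s, x < t := by
  have h1 : #s < Ordinal.cof (Ordinal.type ((· < ·) : Om.{u} → Om.{u} → Prop)) := by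
    rw [type_Om, Cardinal.isRegular_aleph_one.cof_ord]
    exact hs.le_aleph0.trans_lt aleph0_lt_aleph_one
  have hnc : ¬ IsCofinal s := fun hc => (Order.cof_le hc).not_gt (by rwa [Ordinal.cof_type] at h1)
  obtain ⟨t, ht⟩ := not_isCofinal_iff.1 hnc
  exact ⟨t, ht⟩

lemma exists_gt (t : Om.{u}) : ∃ t' : Om.{u}, t < t' := by
  obtain ⟨t', ht'⟩ := bounded_lt (countable_singleton t)
  exact ⟨t', ht' t rfl⟩

lemma card_Iio (t : Om.{u}) : #(Iio t) ≤ (aleph0 : Cardinal.{u}) := by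
  have := Ordinal.typein_lt_type ((· < ·) : Om.{u} → Om.{u} → Prop) t
  rw [type_Om] at this
  rw [Cardinal.lt_ord] at this
  have hc : ((Iio t : Set Om)).Countable := by
    rw [countable_iff_lt_aleph_one]
    calc #(Iio t) = (Ordinal.typein ((· < ·) : Om.{u} → Om.{u} → Prop) t).card :=
          Ordinal.card_typein (r := ((· < ·) : Om.{u} → Om.{u} → Prop)) t
      _ < aleph 1 := this
  exact hc.le_aleph0

namespace Pack
variable {X : Type u} [TopologicalSpace X] (P : Pack X)

noncomputable def D : Om.{u} → Set X :=
  (wellFounded_lt (α := Om.{u})).fix fun t ih => P.Phi (⋃ s : ↥(Iio t), ih (s : Om.{u}) s.2)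

noncomputable def Dlt (t : Om.{u}) : Set X := ⋃ s : ↥(Iio t), P.D (s : Om.{u})

lemma D_eq (t : Om) : P.D t = P.Phi (P.Dlt t) :=
  WellFounded.fix_eq _ _ _

lemma D_subset_Dlt {s t : Om} (h : s < t) : P.D s ⊆ P.Dlt t :=
  subset_iUnion (fun s' : ↥(Iio t) => P.D (s' : Om)) ⟨s, h⟩

lemma Dlt_subset_D (t : Om) : P.Dlt t ⊆ P.D t := by
  rw [D_eq]; exact P.subset_Phi _

lemma D_mono {s t : Om} (h : s ≤ t) : P.D s ⊆ P.D t := by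
  rcases eq_or_lt_of_le h with rfl | hlt
  · exact le_rfl
  · exact (P.D_subset_Dlt hlt).trans (P.Dlt_subset_D t)

lemma card_D (t : Om) : #(P.D t) ≤ continuum := by
  induction t using WellFoundedLT.induction with
  | ind t ih =>
    rw [D_eq]
    refine P.card_Phi ?_
    refine le_trans (mk_iUnion_le _) ?_
    have h1 : ∀ s : ↥(Iio t), #(P.D (s : Om)) ≤ continuum := fun s => ih _ s.2
    calc #↥(Iio t) * ⨆ s : ↥(Iio t), #(P.D (s : Om))
        ≤ (aleph0 : Cardinal.{u}) * continuum := mul_le_mul' (card_Iio t) (ciSup_le' h1)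
      _ ≤ continuum * continuum := mul_le_mul' aleph0_le_continuum le_rfl
      _ = continuum := mul_eq_self aleph0_le_continuum

noncomputable def Dtot : Set X := ⋃ t : Om.{u}, P.D t

lemma card_Dtot : #P.Dtot ≤ continuum := by
  refine le_trans (mk_iUnion_le _) ?_
  have h1 : ∀ t : Om, #(P.D t) ≤ continuum := P.card_D
  calc #(Om.{u}) * ⨆ t : Om.{u}, #(P.D t)
      ≤ (aleph 1 : Cardinal.{u}) * continuum := by
        refine mul_le_mul' ?_ (ciSup_le' h1)
        rw [mk_Om]
    _ ≤ continuum * continuum := mul_le_mul' aleph_one_le_continuum le_rfl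
    _ = continuum := mul_eq_self aleph0_le_continuum

lemma D_subset_Dtot (t : Om) : P.D t ⊆ P.Dtot := subset_iUnion _ t

lemma capture {B : Set X} (hBc : B.Countable) (hB : B ⊆ P.Dtot) :
    ∃ t : Om, B ⊆ P.D t := by
  have hst : ∀ b : ↥B, ∃ t : Om, (b : X) ∈ P.D t := fun b => mem_iUnion.1 (hB b.2)
  choose st hst using hst
  have : Countable ↥B := hBc.to_subtype
  obtain ⟨t, ht⟩ := bounded_lt (countable_range st)
  refine ⟨t, fun b hb => ?_⟩
  exact P.D_mono (le_of_lt (ht _ (mem_range_self ⟨b, hb⟩))) (hst ⟨b, hb⟩)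

/-! ### the main lemmas -/

lemma Dtot_subset_closure_inter {Y : Set X} (hY : Y ∈ P.Yc) :
    P.Dtot ⊆ closure (P.Dtot ∩ Y) := by
  intro d hd
  obtain ⟨t, hdt⟩ := mem_iUnion.1 hd
  obtain ⟨t', htt'⟩ := exists_gt t
  have hdlt : d ∈ P.Dlt t' := P.D_subset_Dlt htt' hdt
  have hA : P.A Y d ⊆ P.D t' := by
    rw [D_eq]
    exact P.A_subset_Phi hY hdlt
  have h1 : P.A Y d ⊆ P.Dtot ∩ Y :=
    subset_inter (hA.trans (P.D_subset_Dtot t')) (P.A_subset hY d)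
  exact closure_mono h1 (P.mem_closure_A hY d)

lemma closure_capture {y : X} (hy : y ∈ closure P.Dtot) :
    ∃ (B : Set X) (t : Om), B.Countable ∧ B ⊆ P.D t ∧ y ∈ closure B := by
  obtain ⟨Y, hY, hyY⟩ : ∃ Y ∈ P.Yc, y ∈ Y := by
    have : y ∈ ⋃₀ P.Yc := P.hYcover ▸ mem_univ y
    exact this
  have h1 : y ∈ closure (P.Dtot ∩ Y) := by
    have h2 := closure_mono (P.Dtot_subset_closure_inter hY)
    rw [closure_closure] at h2
    exact h2 hy
  have h2 : (⟨y, hyY⟩ : ↥Y) ∈ closure (Subtype.val ⁻¹' (P.Dtot ∩ Y)) := by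
    rw [closure_subtype]
    have himg : (Subtype.val '' (Subtype.val ⁻¹' (P.Dtot ∩ Y) : Set ↥Y)) = P.Dtot ∩ Y := by
      rw [Subtype.image_preimage_coe]
      exact inter_eq_right.2 inter_subset_right
    rw [himg]
    exact h1
  obtain ⟨b, hbsub, hbc, hyb⟩ := P.hYct Y hY _ _ h2
  have h3 : y ∈ closure (Subtype.val '' b) := closure_subtype.1 hyb
  have hsub : Subtype.val '' b ⊆ P.Dtot := by
    rintro x ⟨x', hx', rfl⟩
    exact (hbsub hx').1
  obtain ⟨t, ht⟩ := P.capture (hbc.image _) hsub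
  exact ⟨Subtype.val '' b, t, hbc.image _, ht, h3⟩

lemma exists_H {y : X} (hy : y ∈ closure P.Dtot) :
    ∃ (H B : Set X) (t : Om), H ∈ P.HCl B ∧ y ∈ H ∧ B ⊆ P.D t ∧ B.Countable ∧
      H ⊆ closure P.Dtot := by
  obtain ⟨B, t, hBc, hBt, hyB⟩ := P.closure_capture hy
  obtain ⟨H, hH, hyH⟩ := P.HCl_cover (le_trans hBc.le_aleph0 aleph0_le_continuum) hyB
  obtain ⟨t', htt'⟩ := exists_gt t
  have hS : P.S H ⊆ P.D t' := by
    rw [D_eq]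
    exact P.S_subset_Phi (hBt.trans (P.D_subset_Dlt htt')) hBc hH
  have hW : WeightLE ↥H continuum := (P.hH H (P.HCl_subset B hH)).2.2.2
  have hHG : H ⊆ closure P.Dtot := by
    refine (P.subset_closure_S hW).trans ?_
    refine le_trans (closure_mono (hS.trans (P.D_subset_Dtot t'))) ?_
    exact le_rfl
  exact ⟨H, B, t, hH, hyH, hBt, hBc, hHG⟩

lemma escape {f : ℕ → Set X}
    (hf : ∀ n, ∃ (B : Set X) (t : Om), B ⊆ P.D t ∧ B.Countable ∧ f n ∈ opensOf (P.HCl B))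
    (hne : (⋃ n, f n) ≠ Set.univ) : ∃ q ∈ P.Dtot, q ∉ ⋃ n, f n := by
  choose B t hBt hBc hfn using hf
  obtain ⟨ts, hts⟩ := bounded_lt (countable_range t)
  have hpool : ∀ n, f n ∈ P.pool (P.Dlt ts) := by
    intro n
    have hsub : B n ⊆ P.Dlt ts :=
      (hBt n).trans (P.D_subset_Dlt (hts _ (mem_range_self n)))
    exact mem_iUnion.2 ⟨⟨B n, hsub, hBc n⟩, hfn n⟩
  have hmem : P.escPt f ∈ P.esc (P.pool (P.Dlt ts)) := P.escPt_mem_esc hpool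
  have hq : P.escPt f ∈ P.D ts := by
    rw [D_eq]
    exact P.esc_subset_Phi _ hmem
  exact ⟨_, P.D_subset_Dtot ts hq, P.escPt_not_mem hne⟩

lemma Dtot_dense [LindelofSpace X] : closure P.Dtot = Set.univ := by
  by_contra hne
  obtain ⟨p, hp⟩ : ∃ p, p ∉ closure P.Dtot := by
    by_contra h
    push_neg at h
    exact hne (eq_univ_iff_forall.2 h)
  set G := closure P.Dtot with hG
  set Uc : Set (Set X) := {O : Set X |
    (∃ (B : Set X) (t : Om), B ⊆ P.D t ∧ B.Countable ∧ O ∈ opensOf (P.HCl B)) ∧ p ∉ O}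
    with hUc
  have hGU : ∀ y ∈ G, ∃ O ∈ Uc, y ∈ O := by
    intro y hy
    obtain ⟨H, B, t, hH, hyH, hBt, hBc, hHG⟩ := P.exists_H hy
    have hpH : p ∉ H := fun hph => hp (hHG hph)
    have hGδ : IsGδ H := (P.hH H (P.HCl_subset B hH)).2.2.1
    have hnin : ¬(p ∈ ⋂ n, gU H n) := by rw [gU_iInter hGδ]; exact hpH
    obtain ⟨n, hn⟩ : ∃ n, p ∉ gU H n := by simpa [mem_iInter] using hnin
    exact ⟨gU H n, ⟨⟨B, t, hBt, hBc, mem_opensOf hH n⟩, hn⟩, subset_gU hGδ n hyH⟩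
  have hUopen : ∀ O ∈ Uc, IsOpen O := by
    rintro O ⟨⟨B, t, hBt, hBc, hO⟩, -⟩
    obtain ⟨H, hrange⟩ := mem_iUnion.1 hO
    obtain ⟨n, rfl⟩ := hrange
    exact gU_isOpen _ n
  -- Lindelöf: cover by `Uc` together with `Gᶜ`
  let Ucov : Option ↥Uc → Set X := fun o => o.elim Gᶜ (fun O => (O : Set X))
  have hopen : ∀ o, IsOpen (Ucov o) := by
    rintro (_ | O)
    · exact isClosed_closure.isOpen_compl
    · exact hUopen _ O.2
  have hcover : (Set.univ : Set X) ⊆ ⋃ o, Ucov o := by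
    intro x _
    by_cases hx : x ∈ G
    · obtain ⟨O, hOU, hxO⟩ := hGU x hx
      exact mem_iUnion.2 ⟨some ⟨O, hOU⟩, hxO⟩
    · exact mem_iUnion.2 ⟨none, hx⟩
  obtain ⟨r, hrc, hrcov⟩ := isLindelof_univ.elim_countable_subcover Ucov hopen hcover
  set rU : Set ↥Uc := {O | some O ∈ r} with hrU
  have hGsub : G ⊆ ⋃ O : ↥Uc, ⋃ (_ : O ∈ rU), (O : Set X) := by
    intro x hx
    have := hrcov (mem_univ x)
    obtain ⟨i, hir, hxi⟩ := by
      simpa only [mem_iUnion] using this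
    match i with
    | none => exact absurd hx hxi
    | some O => exact mem_iUnion.2 ⟨O, mem_iUnion.2 ⟨hir, hxi⟩⟩
  have hx0 : P.x0 ∈ G := by
    obtain ⟨t0, -⟩ := bounded_lt (countable_empty (α := Om))
    have : P.x0 ∈ P.D t0 := by rw [D_eq]; exact P.x0_mem_Phi _
    exact subset_closure (P.D_subset_Dtot t0 this)
  rcases rU.eq_empty_or_nonempty with hre | hrne
  · have := hGsub hx0
    rw [hre] at this
    simp at this
  · -- enumerate the countable nonempty family
    have hrUc : rU.Countable := hrc.preimage (Option.some_injective _)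
    have hvc : (Subtype.val '' rU : Set (Set X)).Countable := hrUc.image _
    have hvne : (Subtype.val '' rU : Set (Set X)).Nonempty := hrne.image _
    obtain ⟨f, hfr⟩ := hvc.exists_eq_range hvne
    have hfU : ∀ n, f n ∈ Uc := by
      intro n
      have : f n ∈ Subtype.val '' rU := hfr ▸ mem_range_self n
      obtain ⟨O, -, hOeq⟩ := this
      exact hOeq ▸ O.2
    have hfp : ∀ n, p ∉ f n := fun n => (hfU n).2
    have hneuniv : (⋃ n, f n) ≠ Set.univ := by
      intro h
      have : p ∈ ⋃ n, f n := h ▸ mem_univ p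
      obtain ⟨n, hn⟩ := mem_iUnion.1 this
      exact hfp n hn
    obtain ⟨q, hqD, hqn⟩ := P.escape (fun n => (hfU n).1) hneuniv
    have hqG : q ∈ G := subset_closure hqD
    have : q ∈ ⋃ n, f n := by
      have := hGsub hqG
      obtain ⟨O, hO⟩ := mem_iUnion.1 this
      obtain ⟨hOr, hqO⟩ := by simpa only [mem_iUnion] using hO
      have : (O : Set X) ∈ range f := hfr ▸ mem_image_of_mem _ hOr
      obtain ⟨n, hn⟩ := this
      exact mem_iUnion.2 ⟨n, hn ▸ hqO⟩
    exact hqn this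

end Pack
end S6


theorem stmt_6 {X : Type u} [TopologicalSpace X] [LindelofSpace X] [RegularSpace X]
    (𝒴 ℋ : Set (Set X))
    -- (1)
    (h𝒴card : #𝒴 ≤ continuum)
    (h𝒴cover : ⋃₀ 𝒴 = Set.univ)
    (h𝒴ct : ∀ Y ∈ 𝒴, CountablyTight ↥Y)
    (h𝒴big : ∀ Y ∈ 𝒴, ∀ x : X, ∃ A ⊆ Y, #A ≤ continuum ∧ x ∈ closure A)
    -- (2)
    (hℋcover : ⋃₀ ℋ = Set.univ)
    (hℋ : ∀ H ∈ ℋ, H.Nonempty ∧ IsClosed H ∧ IsGδ H ∧ WeightLE ↥H continuum)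
    -- (3)
    (hcl : ∀ D : Set X, #D ≤ continuum → WeightLE ↥(closure D) continuum) :
    WeightLE X continuum := by
  cases isEmpty_or_nonempty X with
  | inl hemp =>
    refine ⟨∅, ?_, by simp⟩
    refine TopologicalSpace.isTopologicalBasis_of_isOpen_of_nhds ?_ ?_
    · intro u hu
      exact absurd hu (notMem_empty u)
    · intro a
      exact (IsEmpty.false a).elim
  | inr hne =>
    let P : S6.Pack X :=
      ⟨𝒴, ℋ, Classical.arbitrary X, h𝒴card, h𝒴cover, h𝒴ct, h𝒴big, hℋcover, hℋ, hcl⟩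
    have hdense := P.Dtot_dense
    have hW := hcl P.Dtot P.card_Dtot
    rw [hdense] at hW
    exact S6.weightLE_of_univ hW
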